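/- For every n ∈ ℕ and all x, y ∈ ℝ with x ≠ y, the Christoffel–Darboux identity holds: Σ_{k=0}^n h_k(x)·h_k(y) = √((n+1)/2) · (h_{n+1}(x)·h_n(y) − h_n(x)·h_{n+1}(y)) / (x − y). -/

import Mathlib

open MeasureTheory Filter Set

/-- The `k`-th Hermite function
`h_k(x) = (-1)^k π^{-1/4} 2^{-k/2} (k!)^{-1/2} e^{x²/2} (d^k/dx^k)(e^{-x²})`. -/
noncomputable def hermiteFun (k : ℕ) (x : ℝ) : ℝ :=
  (-1 : ℝ) ^ k *
    (Real.pi ^ (-(1 : ℝ) / 4) * (2 : ℝ) ^ (-(k : ℝ) / 2) *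
      ((k.factorial : ℝ)) ^ (-(1 : ℝ) / 2)) *
    Real.exp (x ^ 2 / 2) * iteratedDeriv k (fun y : ℝ => Real.exp (-y ^ 2)) x

/-- The `n`-th partial sum of the Hermite series of `f`:
`S_n f = ∑_{k=0}^n (∫ f h_k) h_k`. -/
noncomputable def hermitePartialSum (n : ℕ) (f : ℝ → ℝ) (x : ℝ) : ℝ :=
  ∑ k ∈ Finset.range (n + 1), (∫ y : ℝ, f y * hermiteFun k y) * hermiteFun k x

open Polynomial in
/-- The physicists' Hermite polynomials. -/
noncomputable def Hp : ℕ → Polynomial ℝ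
  | 0 => 1
  | (n+1) => C 2 * X * Hp n - derivative (Hp n)

open Polynomial in
theorem Hp_deriv : ∀ n : ℕ, derivative (Hp (n+1)) = C (2*(n+1) : ℝ) * Hp n := by
  intro n
  induction n with
  | zero => simp [Hp]
  | succ m ih =>
    show derivative (C 2 * X * Hp (m+1) - derivative (Hp (m+1))) = _
    rw [derivative_sub, derivative_mul, derivative_mul, ih, derivative_mul]
    have : C (2*(((m+1:ℕ):ℝ)+1)) = C 2 + C (2*((m:ℝ)+1)) := by
      rw [← C_add]; norm_num; ring_nf
    rw [this]
    have hdef : Hp (m+1) = C 2 * X * Hp m - derivative (Hp m) := rfl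
    rw [hdef]
    simp
    ring

open Polynomial in
theorem Hp_rec (n : ℕ) : Hp (n+2) = C 2 * X * Hp (n+1) - C (2*(n+1) : ℝ) * Hp n := by
  rw [show Hp (n+2) = C 2 * X * Hp (n+1) - derivative (Hp (n+1)) from rfl, Hp_deriv]

theorem gauss_hasDerivAt (x : ℝ) :
    HasDerivAt (fun y : ℝ => Real.exp (-y^2)) (Real.exp (-x^2) * (-(2*x))) x := by
  have h : HasDerivAt (fun y : ℝ => -y^2) (-(2*x)) x := by
    simpa using ((hasDerivAt_pow 2 x).fun_neg)
  exact h.exp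

open Polynomial in
theorem iteratedDeriv_gauss (k : ℕ) (x : ℝ) :
    iteratedDeriv k (fun y : ℝ => Real.exp (-y^2)) x
      = (-1:ℝ)^k * (Hp k).eval x * Real.exp (-x^2) := by
  induction k generalizing x with
  | zero => simp [Hp]
  | succ m ih =>
    rw [iteratedDeriv_succ]
    have hfun : iteratedDeriv m (fun y : ℝ => Real.exp (-y^2))
        = fun x => (-1:ℝ)^m * (Hp m).eval x * Real.exp (-x^2) := funext ih
    rw [hfun]
    have h1 : HasDerivAt (fun x : ℝ => (-1:ℝ)^m * (Hp m).eval x * Real.exp (-x^2))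
        (((-1:ℝ)^m * (derivative (Hp m)).eval x) * Real.exp (-x^2)
          + ((-1:ℝ)^m * (Hp m).eval x) * (Real.exp (-x^2) * (-(2*x)))) x :=
      (((Hp m).hasDerivAt x).const_mul ((-1:ℝ)^m)).mul (gauss_hasDerivAt x)
    rw [h1.deriv]
    have : Hp (m+1) = C 2 * X * Hp m - derivative (Hp m) := rfl
    rw [this]
    simp
    ring

noncomputable def cc (k : ℕ) : ℝ := (Real.sqrt ((2:ℝ)^k * k.factorial))⁻¹

theorem cc_sqrt (k : ℕ) : cc k = Real.sqrt (((2:ℝ)^k * k.factorial)⁻¹) := by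
  rw [cc, Real.sqrt_inv]

theorem L1 (k : ℕ) : Real.sqrt (((k:ℝ)+1)/2) * cc (k+1) * 2 = cc k := by
  have hf : (0:ℝ) < (k.factorial : ℝ) := by exact_mod_cast k.factorial_pos
  have hf1 : (0:ℝ) < ((k+1).factorial : ℝ) := by exact_mod_cast (k+1).factorial_pos
  rw [cc_sqrt, cc_sqrt]
  nth_rewrite 3 [show (2:ℝ) = Real.sqrt 4 by
      rw [show (4:ℝ) = 2^2 by norm_num, Real.sqrt_sq (by norm_num)]]
  rw [← Real.sqrt_mul (by positivity), ← Real.sqrt_mul (by positivity)]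
  congr 1
  rw [Nat.factorial_succ]
  push_cast
  field_simp
  ring

theorem L2 (m : ℕ) :
    Real.sqrt (((m:ℝ)+2)/2) * cc (m+2) * (2*((m:ℝ)+1)) = Real.sqrt (((m:ℝ)+1)/2) * cc m := by
  have hf : (0:ℝ) < (m.factorial : ℝ) := by exact_mod_cast m.factorial_pos
  have hf2 : (0:ℝ) < ((m+2).factorial : ℝ) := by exact_mod_cast (m+2).factorial_pos
  rw [cc_sqrt, cc_sqrt, show (2*((m:ℝ)+1)) = Real.sqrt ((2*((m:ℝ)+1))^2) by
      rw [Real.sqrt_sq (by positivity)],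
    ← Real.sqrt_mul (by positivity), ← Real.sqrt_mul (by positivity),
    ← Real.sqrt_mul (by positivity)]
  congr 1
  rw [show m+2 = (m+1)+1 from rfl, Nat.factorial_succ, Nat.factorial_succ]
  push_cast
  field_simp
  ring

theorem hermiteFun_eq (k : ℕ) (x : ℝ) :
    hermiteFun k x = Real.pi ^ (-(1:ℝ)/4) * cc k * ((Hp k).eval x * Real.exp (-x^2/2)) := by
  have hc : (2:ℝ) ^ (-(k : ℝ) / 2) * ((k.factorial : ℝ)) ^ (-(1 : ℝ) / 2) = cc k := by
    have h2 : (0:ℝ) ≤ (2:ℝ)^k := by positivity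
    have hfn : (0:ℝ) ≤ (k.factorial : ℝ) := by positivity
    rw [cc_sqrt, Real.sqrt_eq_rpow, Real.inv_rpow (by positivity), Real.mul_rpow h2 hfn,
      mul_inv, ← Real.rpow_natCast (2:ℝ) k, ← Real.rpow_mul (by norm_num),
      ← Real.rpow_neg (by norm_num : (0:ℝ) ≤ 2), ← Real.rpow_neg hfn]
    congr 1
    · congr 1; ring
    · congr 1; ring
  rw [hermiteFun, iteratedDeriv_gauss]
  have hE : Real.exp (x^2/2) * Real.exp (-x^2) = Real.exp (-x^2/2) := by
    rw [← Real.exp_add]; ring_nf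
  have hs : ((-1:ℝ)^k) * ((-1:ℝ)^k) = 1 := by
    rw [← pow_add]; exact Even.neg_one_pow ⟨k, rfl⟩
  calc ((-1:ℝ)^k * (Real.pi ^ (-(1:ℝ)/4) * (2:ℝ) ^ (-(k:ℝ)/2) * (k.factorial:ℝ) ^ (-(1:ℝ)/2))
        * Real.exp (x^2/2)) * ((-1:ℝ)^k * (Hp k).eval x * Real.exp (-x^2))
      = ((-1:ℝ)^k * (-1:ℝ)^k) * (Real.pi ^ (-(1:ℝ)/4)
          * ((2:ℝ) ^ (-(k:ℝ)/2) * (k.factorial:ℝ) ^ (-(1:ℝ)/2)))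
          * ((Hp k).eval x * (Real.exp (x^2/2) * Real.exp (-x^2))) := by ring
    _ = _ := by rw [hs, hc, hE]; ring

theorem hermite_rec (k : ℕ) (x : ℝ) :
    x * hermiteFun k x = Real.sqrt (((k:ℝ)+1)/2) * hermiteFun (k+1) x
      + Real.sqrt ((k:ℝ)/2) * hermiteFun (k-1) x := by
  simp only [hermiteFun_eq]
  set P := Real.pi ^ (-(1:ℝ)/4) with hP
  set E := Real.exp (-x^2/2) with hEdef
  match k with
  | 0 =>
    have h1 : (Hp 1).eval x = 2 * x := by simp [Hp]
    have h0 : (Hp 0).eval x = 1 := by simp [Hp]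
    have hL1 := L1 0
    norm_num [h1, h0] at hL1 ⊢
    linear_combination (-(P * E * x)) * hL1
  | (m+1) =>
    have hrec : (Hp (m+2)).eval x
        = 2 * x * (Hp (m+1)).eval x - 2*((m:ℝ)+1) * (Hp m).eval x := by
      rw [Hp_rec]; simp
    have hL1 := L1 (m+1)
    have hL2 := L2 m
    push_cast at hL1 hL2 ⊢
    rw [show ((m:ℝ)+1+1) = (m:ℝ)+2 from by ring] at hL1 ⊢
    rw [hrec]
    linear_combination (-(x * P * (Hp (m+1)).eval x * E)) * hL1
      + (P * (Hp m).eval x * E) * hL2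

noncomputable def FF (x y : ℝ) (k : ℕ) : ℝ :=
  Real.sqrt ((k:ℝ)/2) *
    (hermiteFun k x * hermiteFun (k-1) y - hermiteFun (k-1) x * hermiteFun k y)

theorem FF_zero (x y : ℝ) : FF x y 0 = 0 := by simp [FF]

theorem FF_succ (x y : ℝ) (k : ℕ) : FF x y (k+1) = Real.sqrt (((k:ℝ)+1)/2) *
    (hermiteFun (k+1) x * hermiteFun k y - hermiteFun k x * hermiteFun (k+1) y) := by
  rw [FF, Nat.add_sub_cancel]
  push_cast
  ring

/-- **Christoffel–Darboux identity for Hermite functions.** -/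
theorem hermite_christoffel_darboux (n : ℕ) (x y : ℝ) (hxy : x ≠ y) :
    ∑ k ∈ Finset.range (n + 1), hermiteFun k x * hermiteFun k y =
      Real.sqrt (((n : ℝ) + 1) / 2) *
        ((hermiteFun (n + 1) x * hermiteFun n y - hermiteFun n x * hermiteFun (n + 1) y)
          / (x - y)) := by
  have hstep : ∀ k, (x - y) * (hermiteFun k x * hermiteFun k y)
      = FF x y (k+1) - FF x y k := by
    intro k
    have hx := hermite_rec k x
    have hy := hermite_rec k y
    rw [FF_succ, FF]
    linear_combination hermiteFun k y * hx - hermiteFun k x * hy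
  have hsum : (x - y) * ∑ k ∈ Finset.range (n+1), hermiteFun k x * hermiteFun k y
      = FF x y (n+1) := by
    rw [Finset.mul_sum]
    rw [show (∑ k ∈ Finset.range (n+1), (x - y) * (hermiteFun k x * hermiteFun k y))
        = ∑ k ∈ Finset.range (n+1), (FF x y (k+1) - FF x y k) from
      Finset.sum_congr rfl fun k _ => hstep k]
    rw [Finset.sum_range_sub (FF x y), FF_zero, sub_zero]
  rw [mul_div_assoc', eq_div_iff (sub_ne_zero.mpr hxy), ← FF_succ]
  linear_combination hsum
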